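/- Let t ≥ 1 be an integer and ξ a real number. Then (1/(2π)) ∫_{−∞}^{∞} exp(ξ(−1+is) + (−1+is)²/2) · (−1+is)^{t−1} ds = (−1)^{t−1} · H_{t−1}(ξ) · e^{−ξ²/2} / √(2π). -/

import Mathlib

open MeasureTheory Complex Polynomial Filter

noncomputable def Eg (ξ : ℝ) (s : ℝ) : ℂ :=
  Complex.exp ((-1/2 : ℂ) * (s:ℂ)^2 + Complex.I * ((ξ:ℂ) - 1) * (s:ℂ) + (1/2 - (ξ:ℂ)))

noncomputable def uc (s : ℝ) : ℂ := -1 + Complex.I * (s:ℂ)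

lemma exponent_eq (ξ s : ℝ) :
    (ξ : ℂ) * (-1 + Complex.I * (s : ℂ)) + (-1 + Complex.I * (s : ℂ)) ^ 2 / 2
      = (-1/2 : ℂ) * (s:ℂ)^2 + Complex.I * ((ξ:ℂ) - 1) * (s:ℂ) + (1/2 - (ξ:ℂ)) := by
  linear_combination ((s:ℂ)^2/2) * Complex.I_sq

lemma base0 (ξ : ℝ) : (∫ s : ℝ, Eg ξ s) = (Real.sqrt (2*Real.pi) : ℂ) * Complex.exp (-(ξ:ℂ)^2/2) := by
  simp only [Eg]
  rw [integral_cexp_quadratic (by norm_num : ((-1/2 : ℂ)).re < 0)]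
  congr 1
  · rw [show ((Real.pi : ℂ) / -(-1/2)) = ((2*Real.pi : ℝ) : ℂ) by push_cast; ring,
      Real.sqrt_eq_rpow, Complex.ofReal_cpow (by positivity)]
    norm_num
  · congr 1
    linear_combination (((ξ:ℂ)-1)^2/2) * Complex.I_sq

lemma norm_bound (ξ : ℝ) (n : ℕ) (s : ℝ) :
    ‖Eg ξ s * uc s ^ n‖ ≤ Real.exp (1/2 - ξ) * (2^n * ((1 + s^(2*n)) * Real.exp (-(1/2) * s^2))) := by
  have habs : ‖uc s‖ = Real.sqrt (1 + s^2) := by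
    rw [Complex.norm_def]
    congr 1
    simp [uc, Complex.normSq_apply]
    ring
  have hre : ((-1/2 : ℂ) * (s:ℂ)^2 + Complex.I * ((ξ:ℂ) - 1) * (s:ℂ) + (1/2 - (ξ:ℂ))).re
      = -(1/2) * s^2 + (1/2 - ξ) := by
    simp [Complex.add_re, Complex.mul_re, Complex.I_re, Complex.I_im, ← Complex.ofReal_pow]
    ring
  have h1 : ‖Eg ξ s * uc s ^ n‖
      = Real.exp (-(1/2) * s^2 + (1/2 - ξ)) * Real.sqrt (1 + s^2) ^ n := by
    rw [norm_mul, norm_pow, Eg, Complex.norm_exp, hre, habs]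
  rw [h1, Real.exp_add]
  have hs : Real.sqrt (1 + s^2) ≤ 1 + s^2 := by
    nlinarith [Real.sq_sqrt (show (0:ℝ) ≤ 1+s^2 by positivity), Real.sqrt_nonneg (1+s^2)]
  have hpow : Real.sqrt (1 + s^2) ^ n ≤ 2^n * (1 + s^(2*n)) := by
    have h2 : Real.sqrt (1+s^2) ^ n ≤ (1+s^2)^n :=
      pow_le_pow_left₀ (Real.sqrt_nonneg _) hs n
    refine h2.trans ?_
    have h3 : s^(2*n) = (s^2)^n := by rw [pow_mul]
    rcases le_total (s^2) 1 with h | h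
    · calc (1+s^2)^n ≤ 2^n := pow_le_pow_left₀ (by positivity) (by linarith) n
        _ ≤ 2^n * (1 + s^(2*n)) :=
          le_mul_of_one_le_right (by positivity) (by nlinarith [pow_nonneg (sq_nonneg s) n])
    · calc (1+s^2)^n ≤ (2*s^2)^n := pow_le_pow_left₀ (by positivity) (by linarith) n
        _ = 2^n * s^(2*n) := by rw [mul_pow, h3]
        _ ≤ 2^n * (1 + s^(2*n)) := by
            have : (0:ℝ) ≤ 2^n := by positivity
            nlinarith
  calc Real.exp (-(1/2)*s^2) * Real.exp (1/2-ξ) * Real.sqrt (1+s^2)^n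
      ≤ Real.exp (-(1/2)*s^2) * Real.exp (1/2-ξ) * (2^n * (1 + s^(2*n))) := by
        apply mul_le_mul_of_nonneg_left hpow (by positivity)
    _ = Real.exp (1/2-ξ) * (2^n * ((1 + s^(2*n)) * Real.exp (-(1/2)*s^2))) := by ring

lemma majorant_integrable (ξ : ℝ) (n : ℕ) :
    Integrable (fun s : ℝ => Real.exp (1/2 - ξ) * (2^n * ((1 + s^(2*n)) * Real.exp (-(1/2) * s^2)))) := by
  have h1 : Integrable (fun s : ℝ => Real.exp (-(1/2) * s^2)) :=
    integrable_exp_neg_mul_sq (by norm_num)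
  have h2 : Integrable (fun s : ℝ => s^(2*n) * Real.exp (-(1/2) * s^2)) := by
    have := integrable_rpow_mul_exp_neg_mul_sq (b := 1/2) (by norm_num) (s := (2*n : ℝ))
      (by nlinarith [(Nat.cast_nonneg n : (0:ℝ) ≤ n)])
    rw [show ((2:ℝ)*n) = ((2*n : ℕ) : ℝ) by push_cast; ring] at this
    simp_rw [Real.rpow_natCast] at this
    simpa [neg_mul] using this
  have : Integrable (fun s : ℝ => (1 + s^(2*n)) * Real.exp (-(1/2) * s^2)) := by
    simpa [add_mul, one_mul, Pi.add_def] using h1.add h2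
  exact ((this.const_mul _).const_mul _)

lemma f_integrable (ξ : ℝ) (n : ℕ) : Integrable (fun s : ℝ => Eg ξ s * uc s ^ n) := by
  refine (majorant_integrable ξ n).mono' ?_ ?_
  · apply Continuous.aestronglyMeasurable
    simp only [Eg, uc]
    fun_prop
  · exact Filter.Eventually.of_forall (norm_bound ξ n)

lemma hasDerivAt_F (ξ : ℝ) (n : ℕ) (s : ℝ) :
    HasDerivAt (fun s : ℝ => Eg ξ s * uc s ^ n)
      (Complex.I * (ξ:ℂ) * (Eg ξ s * uc s ^ n) + Complex.I * (Eg ξ s * uc s ^ (n+1))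
        + Complex.I * (n:ℂ) * (Eg ξ s * uc s ^ (n-1))) s := by
  have h0 : HasDerivAt (fun s : ℝ => (s:ℂ)) 1 s := by
    simpa using (hasDerivAt_id s).ofReal_comp
  have hq : HasDerivAt (fun s : ℝ => (-1/2 : ℂ) * (s:ℂ)^2 + Complex.I * ((ξ:ℂ) - 1) * (s:ℂ) + (1/2 - (ξ:ℂ)))
      ((-1/2 : ℂ) * (2 * (s:ℂ)) + Complex.I * ((ξ:ℂ) - 1)) s := by
    have h1 := (((hasDerivAt_pow 2 ((s:ℂ))).comp s h0).const_mul ((-1/2 : ℂ)))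
    have h2 := h0.const_mul (Complex.I * ((ξ:ℂ) - 1))
    have := (h1.add h2).add_const (1/2 - (ξ:ℂ))
    refine this.congr_deriv ?_
    push_cast
    ring
  have hE : HasDerivAt (fun s : ℝ => Eg ξ s)
      (Eg ξ s * ((-1/2 : ℂ) * (2 * (s:ℂ)) + Complex.I * ((ξ:ℂ) - 1))) s := by
    simpa [Eg, mul_comm] using hq.cexp
  have hu : HasDerivAt (fun s : ℝ => uc s) Complex.I s := by
    simpa [uc] using (h0.const_mul Complex.I).const_add (-1 : ℂ)
  have hun : HasDerivAt (fun s : ℝ => uc s ^ n) ((n:ℂ) * uc s ^ (n-1) * Complex.I) s := by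
    have := (hasDerivAt_pow n (uc s)).comp s hu
    simpa [Function.comp_def, mul_comm] using this
  have := hE.mul hun
  refine this.congr_deriv (Eq.symm ?_)
  simp only [uc]
  cases n with
  | zero =>
    simp only [pow_zero, Nat.zero_sub, Nat.cast_zero]
    linear_combination ((s:ℂ) * Eg ξ s) * Complex.I_sq
  | succ m =>
    simp only [Nat.add_sub_cancel, Nat.cast_add, Nat.cast_one]
    linear_combination ((s:ℂ) * Eg ξ s * (-1 + Complex.I * (s:ℂ)) ^ (m+1)) * Complex.I_sq

lemma tendsto_majorant (C : ℝ) (n : ℕ) (l : Filter ℝ)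
    (hl : Tendsto (fun s : ℝ => s^2) l atTop) :
    Tendsto (fun s : ℝ => C * ((1 + s^(2*n)) * Real.exp (-(1/2) * s^2))) l (nhds 0) := by
  have h1 : Tendsto (fun s : ℝ => Real.exp (-(1/2) * s^2)) l (nhds 0) := by
    apply Real.tendsto_exp_atBot.comp
    exact Tendsto.const_mul_atTop_of_neg (by norm_num) hl
  have h2 : Tendsto (fun s : ℝ => s^(2*n) * Real.exp (-(1/2) * s^2)) l (nhds 0) := by
    have hcomp := ((Real.tendsto_pow_mul_exp_neg_atTop_nhds_zero n).comp
      (hl.atTop_div_const (by norm_num : (0:ℝ) < 2))).const_mul ((2:ℝ)^n)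
    simp only [Function.comp_def, mul_zero] at hcomp
    apply hcomp.congr
    intro s
    rw [← mul_assoc, ← mul_pow]
    congr 1
    · rw [pow_mul]; congr 1; ring
    · congr 1; ring
  have h3 := ((h1.add h2).const_mul C)
  simp only [add_zero, mul_zero] at h3
  apply h3.congr
  intro s
  ring

lemma tendsto_F (ξ : ℝ) (n : ℕ) (l : Filter ℝ) (hl : Tendsto (fun s : ℝ => s^2) l atTop) :
    Tendsto (fun s : ℝ => Eg ξ s * uc s ^ n) l (nhds 0) := by
  apply squeeze_zero_norm (a := fun s : ℝ =>
    (Real.exp (1/2 - ξ) * 2^n) * ((1 + s^(2*n)) * Real.exp (-(1/2) * s^2)))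
  · intro s
    exact (norm_bound ξ n s).trans (le_of_eq (by ring))
  · exact tendsto_majorant _ n l hl

lemma sq_tendsto_atTop : Tendsto (fun s : ℝ => s^2) atTop atTop :=
  tendsto_pow_atTop (by norm_num)

lemma sq_tendsto_atBot : Tendsto (fun s : ℝ => s^2) atBot atTop := by
  have := (tendsto_pow_atTop (n := 2) (by norm_num)).comp tendsto_neg_atBot_atTop (α := ℝ)
  simpa [Function.comp_def, neg_sq] using this

lemma rec_step (ξ : ℝ) (n : ℕ) :
    (∫ s : ℝ, Eg ξ s * uc s ^ (n+1))
      = -(ξ:ℂ) * (∫ s : ℝ, Eg ξ s * uc s ^ n) - (n:ℂ) * ∫ s : ℝ, Eg ξ s * uc s ^ (n-1) := by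
  set J : ℕ → ℂ := fun m => ∫ s : ℝ, Eg ξ s * uc s ^ m with hJ
  have hint : Integrable (fun s : ℝ =>
      Complex.I * (ξ:ℂ) * (Eg ξ s * uc s ^ n) + Complex.I * (Eg ξ s * uc s ^ (n+1))
        + Complex.I * (n:ℂ) * (Eg ξ s * uc s ^ (n-1))) :=
    (((f_integrable ξ n).const_mul _).add ((f_integrable ξ (n+1)).const_mul _)).add
      ((f_integrable ξ (n-1)).const_mul _)
  have hIic := integral_Iic_of_hasDerivAt_of_tendsto' (a := 0)
    (fun x _ => hasDerivAt_F ξ n x) hint.integrableOn (tendsto_F ξ n atBot sq_tendsto_atBot)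
  have hIoi := integral_Ioi_of_hasDerivAt_of_tendsto' (a := 0)
    (fun x _ => hasDerivAt_F ξ n x) hint.integrableOn (tendsto_F ξ n atTop sq_tendsto_atTop)
  have htot := intervalIntegral.integral_Iic_add_Ioi (b := (0:ℝ)) hint.integrableOn hint.integrableOn
  rw [hIic, hIoi] at htot
  have h0 : (∫ s : ℝ, (Complex.I * (ξ:ℂ) * (Eg ξ s * uc s ^ n) + Complex.I * (Eg ξ s * uc s ^ (n+1))
        + Complex.I * (n:ℂ) * (Eg ξ s * uc s ^ (n-1)))) = 0 := by
    rw [← htot]; ring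
  have h0' : Complex.I * (ξ:ℂ) * J n + Complex.I * J (n+1) + Complex.I * (n:ℂ) * J (n-1) = 0 := by
    simp only [hJ]
    rw [← integral_const_mul, ← integral_const_mul, ← integral_const_mul,
      ← integral_add ((f_integrable ξ n).const_mul _) ((f_integrable ξ (n+1)).const_mul _),
      ← integral_add (show Integrable (fun s : ℝ => Complex.I * (ξ:ℂ) * (Eg ξ s * uc s ^ n)
          + Complex.I * (Eg ξ s * uc s ^ (n+1))) volume from
          ((f_integrable ξ n).const_mul _).add ((f_integrable ξ (n+1)).const_mul _))
        ((f_integrable ξ (n-1)).const_mul _)]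
    exact h0
  have hI : Complex.I * ((ξ:ℂ) * J n + J (n+1) + (n:ℂ) * J (n-1)) = 0 := by
    rw [← h0']; ring
  have h2 := (mul_eq_zero.mp hI).resolve_left Complex.I_ne_zero
  show J (n+1) = -(ξ:ℂ) * J n - (n:ℂ) * J (n-1)
  linear_combination h2
lemma hermite_deriv (n : ℕ) :
    Polynomial.derivative (Polynomial.hermite (n+1)) = (n+1) • Polynomial.hermite n := by
  induction n with
  | zero => simp [hermite_one, hermite_zero]
  | succ n ih =>
    rw [hermite_succ (n+1), derivative_sub, derivative_mul, derivative_X, one_mul, ih,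
      derivative_smul, mul_smul_comm, hermite_succ n]
    simp only [smul_sub, succ_nsmul]
    abel

lemma herm_val (ξ : ℝ) (n : ℕ) :
    (Polynomial.aeval ξ (Polynomial.hermite (n+1)) : ℝ)
      = ξ * Polynomial.aeval ξ (Polynomial.hermite n)
        - (n:ℝ) * Polynomial.aeval ξ (Polynomial.hermite (n-1)) := by
  cases n with
  | zero => simp [hermite_one, hermite_zero]
  | succ m =>
    rw [hermite_succ (m+1), hermite_deriv m, map_sub, map_mul, aeval_X, map_nsmul]
    push_cast
    ring

noncomputable def Kc (ξ : ℝ) (n : ℕ) : ℂ :=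
  (-1:ℂ)^n * ((Polynomial.aeval ξ (Polynomial.hermite n) : ℝ) : ℂ)
    * Complex.exp (-(ξ:ℂ)^2/2) * (Real.sqrt (2*Real.pi) : ℂ)

lemma Kc_rec (ξ : ℝ) (n : ℕ) : Kc ξ (n+1) = -(ξ:ℂ) * Kc ξ n - (n:ℂ) * Kc ξ (n-1) := by
  simp only [Kc]
  rw [herm_val ξ n]
  cases n with
  | zero => push_cast; ring
  | succ m =>
    simp only [Nat.add_sub_cancel]
    push_cast
    ring

lemma main_J (ξ : ℝ) (n : ℕ) : (∫ s : ℝ, Eg ξ s * uc s ^ n) = Kc ξ n := by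
  have h0 : (∫ s : ℝ, Eg ξ s * uc s ^ 0) = Kc ξ 0 := by
    simp only [pow_zero, mul_one]
    rw [base0]
    simp [Kc, hermite_zero]
    ring
  have h1 : (∫ s : ℝ, Eg ξ s * uc s ^ 1) = Kc ξ 1 := by
    have hr := rec_step ξ 0
    simp only [Nat.cast_zero, zero_mul, sub_zero, Nat.zero_sub] at hr
    have hk := Kc_rec ξ 0
    simp only [Nat.cast_zero, zero_mul, sub_zero, Nat.zero_sub] at hk
    rw [hr, h0, ← hk]
  have key : ∀ m, ((∫ s : ℝ, Eg ξ s * uc s ^ m) = Kc ξ m)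
      ∧ ((∫ s : ℝ, Eg ξ s * uc s ^ (m+1)) = Kc ξ (m+1)) := by
    intro m
    induction m with
    | zero => exact ⟨h0, h1⟩
    | succ m ih =>
      refine ⟨ih.2, ?_⟩
      have hr := rec_step ξ (m+1)
      simp only [Nat.add_sub_cancel] at hr
      have hk := Kc_rec ξ (m+1)
      simp only [Nat.add_sub_cancel] at hk
      rw [hr, ih.1, ih.2, ← hk]
  exact (key n).1

/-- The vertical-line contour integral representation of the probabilists' Hermite
polynomials: `(1/(2πi)) ∫_{Re u = -1} e^{ξu + u²/2} u^{t-1} du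
  = (-1)^{t-1} H_{t-1}(ξ) e^{-ξ²/2} / √(2π)`,
written out via the parametrization `u = -1 + i s`. -/
theorem stmt_9 (t : ℕ) (ht : 1 ≤ t) (ξ : ℝ) :
    (1 / (2 * (Real.pi : ℂ))) *
      ∫ s : ℝ,
        Complex.exp ((ξ : ℂ) * (-1 + Complex.I * (s : ℂ)) +
            (-1 + Complex.I * (s : ℂ)) ^ 2 / 2) *
          (-1 + Complex.I * (s : ℂ)) ^ (t - 1)
      = (((-1 : ℝ) ^ (t - 1) * (Polynomial.aeval ξ (Polynomial.hermite (t - 1))) *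
            Real.exp (-ξ ^ 2 / 2) / Real.sqrt (2 * Real.pi) : ℝ) : ℂ) := by
  have hJ := main_J ξ (t-1)
  simp only [Eg, uc] at hJ
  simp_rw [exponent_eq]
  rw [hJ]
  simp only [Kc]
  have hs : (0:ℝ) < Real.sqrt (2*Real.pi) := Real.sqrt_pos.mpr (by positivity)
  have h2π : ((Real.sqrt (2*Real.pi) : ℝ):ℂ) * ((Real.sqrt (2*Real.pi) : ℝ):ℂ)
      = 2*(Real.pi:ℂ) := by
    rw [← Complex.ofReal_mul, Real.mul_self_sqrt (by positivity)]
    push_cast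
    ring
  have hne : ((Real.sqrt (2*Real.pi) : ℝ):ℂ) ≠ 0 := Complex.ofReal_ne_zero.mpr (ne_of_gt hs)
  have hpi : (2*(Real.pi:ℂ)) ≠ 0 := by
    simp [Real.pi_ne_zero]
  push_cast
  generalize hS : ((Real.sqrt (2*Real.pi) : ℝ):ℂ) = S at h2π hne ⊢
  field_simp
  linear_combination (((Polynomial.aeval ξ (Polynomial.hermite (t-1)) : ℝ):ℂ)) * h2π
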